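/- arXiv:2108.05253 — 2 statements merged into one kernel-verified Lean document; each statement's English description precedes it below -/
import Mathlib

section
/- Let U be an n×n unitary complex matrix and C an invertible n×n complex matrix, and set A = C·(U − I) and B = i·C·(U + I). Then A·B† = B·A† (where † denotes the conjugate transpose), and A + iB = −2C is invertible; in particular the n×2n block matrix (A, B) has maximal rank n. -/
open Matrix

/-- For a unitary `n×n` matrix `U` and an invertible `n×n` matrix `C`, the matrices
`A = C(U − I)` and `B = iC(U + I)` satisfy `A·B† = B·A†`, and `A + iB = −2C` is
invertible; in particular the `n×2n` block matrix `(A, B)` has maximal rank `n`. -/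
theorem coupling_matrices_selfadjoint (n : ℕ) (U C : Matrix (Fin n) (Fin n) ℂ)
    (hU1 : U * Uᴴ = 1) (hU2 : Uᴴ * U = 1) (hC : IsUnit C)
    (A B : Matrix (Fin n) (Fin n) ℂ)
    (hA : A = C * (U - 1)) (hB : B = Complex.I • (C * (U + 1))) :
    A * Bᴴ = B * Aᴴ ∧
    A + Complex.I • B = (-2 : ℂ) • C ∧
    IsUnit (A + Complex.I • B) ∧
    (Matrix.fromCols A B).rank = n := by
  have hsum : A + Complex.I • B = (-2 : ℂ) • C := by
    subst hA hB
    rw [smul_smul, Complex.I_mul_I, neg_one_smul, mul_sub, mul_add, mul_one]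
    module
  have key1 : (U - 1) * (Uᴴ + 1) = U - Uᴴ := by
    rw [sub_mul, one_mul, mul_add, mul_one, hU1]; abel
  have key2 : (U + 1) * (Uᴴ - 1) = Uᴴ - U := by
    rw [add_mul, one_mul, mul_sub, mul_one, hU1]; abel
  have hcomm : A * Bᴴ = B * Aᴴ := by
    subst hA hB
    simp only [conjTranspose_smul, conjTranspose_mul, Complex.star_def, Complex.conj_I,
      smul_mul_assoc, mul_smul_comm, conjTranspose_sub, conjTranspose_add, conjTranspose_one,
      ← mul_assoc]
    rw [mul_assoc C (U - 1) (Uᴴ + 1), key1, mul_assoc C (U + 1) (Uᴴ - 1), key2,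
      show Uᴴ - U = -(U - Uᴴ) from by abel, mul_neg, neg_mul, smul_neg, neg_smul]
  have hunit : IsUnit (A + Complex.I • B) := by
    rw [hsum]
    have h2 : ((Units.mk0 (-2 : ℂ) (by norm_num)) : ℂˣ) • C = (-2 : ℂ) • C := rfl
    rw [← h2]
    exact hC.smul _
  refine ⟨hcomm, hsum, hunit, le_antisymm ?_ ?_⟩
  · simpa using (Matrix.fromCols A B).rank_le_card_height
  · have h := Matrix.rank_mul_le_left (Matrix.fromCols A B)
      (Matrix.fromRows (1 : Matrix (Fin n) (Fin n) ℂ) (Complex.I • 1))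
    rw [Matrix.fromCols_mul_fromRows] at h
    simp only [Matrix.mul_one, Matrix.mul_smul, Matrix.mul_one] at h
    have hr : (A + Complex.I • B).rank = n := by
      rw [Matrix.rank_of_isUnit _ hunit, Fintype.card_fin]
    omega
end

section
/- Fix ℓ > 0 and E ∈ ℝ. There exist functions f₁, f₂, f₃ : [0, ℓ] → ℂ, each twice continuously differentiable with f_j'' = −E·f_j on [0, ℓ], not all identically zero, satisfying f₁'(0) = f₂'(0) = f₃'(0) = 0 together with the preferred-orientation coupling at the central vertex: −f₁(ℓ) + f₂(ℓ) − i(f₁'(ℓ) + f₂'(ℓ)) = 0, −f₂(ℓ) + f₃(ℓ) − i(f₂'(ℓ) + f₃'(ℓ)) = 0, and f₁(ℓ) − f₃(ℓ) − i(f₁'(ℓ) + f₃'(ℓ)) = 0, if and only if there exists a not-identically-zero twice continuously differentiable g : [0, ℓ] → ℂ with g'' = −E·g, g'(0) = 0, and at least one of: g'(ℓ) = 0, or −g'(ℓ) = √3·g(ℓ), or −g'(ℓ) = −√3·g(ℓ). -/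
open Set

/-- `IsSol ℓ E f f'` says that `f : [0,ℓ] → ℂ` is twice continuously differentiable
with first derivative `f'` and second derivative `f'' = −E·f` on `[0, ℓ]`. -/
def IsSol (ℓ E : ℝ) (f f' : ℝ → ℂ) : Prop :=
  (∀ x ∈ Icc (0 : ℝ) ℓ, HasDerivWithinAt f (f' x) (Icc (0 : ℝ) ℓ) x) ∧
  (∀ x ∈ Icc (0 : ℝ) ℓ, HasDerivWithinAt f' (-(E : ℂ) * f x) (Icc (0 : ℝ) ℓ) x)

private lemma isSol_comb {ℓ E : ℝ} {f₁ f₁' f₂ f₂' f₃ f₃' : ℝ → ℂ} (c₂ c₃ : ℂ)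
    (h₁ : IsSol ℓ E f₁ f₁') (h₂ : IsSol ℓ E f₂ f₂') (h₃ : IsSol ℓ E f₃ f₃') :
    IsSol ℓ E (fun x => f₁ x + c₂ * f₂ x + c₃ * f₃ x)
      (fun x => f₁' x + c₂ * f₂' x + c₃ * f₃' x) := by
  constructor
  · intro x hx
    exact ((h₁.1 x hx).add ((h₂.1 x hx).const_mul c₂)).add ((h₃.1 x hx).const_mul c₃)
  · intro x hx
    have h := ((h₁.2 x hx).add ((h₂.2 x hx).const_mul c₂)).add ((h₃.2 x hx).const_mul c₃)
    refine h.congr_deriv ?_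
    ring

private lemma isSol_mul {ℓ E : ℝ} {g g' : ℝ → ℂ} (c : ℂ) (h : IsSol ℓ E g g') :
    IsSol ℓ E (fun x => c * g x) (fun x => c * g' x) := by
  constructor
  · intro x hx
    exact (h.1 x hx).const_mul c
  · intro x hx
    have h2 := (h.2 x hx).const_mul c
    refine h2.congr_deriv ?_
    ring

/-- The three-edge equilateral star graph with Neumann conditions at the loose ends and
the preferred-orientation coupling at the central vertex has a nonzero eigenfunction
with eigenvalue `E` iff one of its three quotient segments does: Neumann–Neumann,
Neumann–Robin with parameter `√3`, or Neumann–Robin with parameter `−√3`. -/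
theorem star_preferred_orientation_spectrum (ℓ E : ℝ) (hℓ : 0 < ℓ) :
    (∃ f₁ f₁' f₂ f₂' f₃ f₃' : ℝ → ℂ,
      IsSol ℓ E f₁ f₁' ∧ IsSol ℓ E f₂ f₂' ∧ IsSol ℓ E f₃ f₃' ∧
      (∃ x ∈ Icc (0 : ℝ) ℓ, f₁ x ≠ 0 ∨ f₂ x ≠ 0 ∨ f₃ x ≠ 0) ∧
      f₁' 0 = 0 ∧ f₂' 0 = 0 ∧ f₃' 0 = 0 ∧
      -f₁ ℓ + f₂ ℓ - Complex.I * (f₁' ℓ + f₂' ℓ) = 0 ∧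
      -f₂ ℓ + f₃ ℓ - Complex.I * (f₂' ℓ + f₃' ℓ) = 0 ∧
      f₁ ℓ - f₃ ℓ - Complex.I * (f₁' ℓ + f₃' ℓ) = 0) ↔
    (∃ g g' : ℝ → ℂ, IsSol ℓ E g g' ∧ (∃ x ∈ Icc (0 : ℝ) ℓ, g x ≠ 0) ∧
      g' 0 = 0 ∧
      (g' ℓ = 0 ∨ -g' ℓ = (Real.sqrt 3 : ℂ) * g ℓ ∨
        -g' ℓ = -(Real.sqrt 3 : ℂ) * g ℓ)) := by
  have hs : (Real.sqrt 3 : ℂ) * (Real.sqrt 3 : ℂ) = 3 := by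
    rw [← Complex.ofReal_mul, Real.mul_self_sqrt (by norm_num : (0:ℝ) ≤ 3)]
    norm_num
  have hI : Complex.I * Complex.I = -1 := Complex.I_mul_I
  constructor
  · rintro ⟨f₁, f₁', f₂, f₂', f₃, f₃', h1, h2, h3, ⟨x₀, hx₀, hne⟩, hb1, hb2, hb3, e1, e2, e3⟩
    have key : f₁ x₀ + (1:ℂ) * f₂ x₀ + (1:ℂ) * f₃ x₀ ≠ 0 ∨
        f₁ x₀ + ((-1 - Complex.I * (Real.sqrt 3 : ℂ)) / 2) * f₂ x₀ + ((-1 + Complex.I * (Real.sqrt 3 : ℂ)) / 2) * f₃ x₀ ≠ 0 ∨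
        f₁ x₀ + ((-1 + Complex.I * (Real.sqrt 3 : ℂ)) / 2) * f₂ x₀ + ((-1 - Complex.I * (Real.sqrt 3 : ℂ)) / 2) * f₃ x₀ ≠ 0 := by
      by_contra hcon
      push_neg at hcon
      obtain ⟨z0, z1, z2⟩ := hcon
      rcases hne with h | h | h
      · exact h (by linear_combination (1/3 : ℂ) * z0 + (1/3 : ℂ) * z1 + (1/3 : ℂ) * z2)
      · exact h (by linear_combination (1/3 : ℂ) * z0 + ((-1 + (Real.sqrt 3 : ℂ) * Complex.I)/6) * z1
          + ((-1 - (Real.sqrt 3 : ℂ) * Complex.I)/6) * z2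
          + ((- f₃ x₀ * (Real.sqrt 3 : ℂ)^2 + f₂ x₀ * (Real.sqrt 3 : ℂ)^2)/6) * hI + ((f₃ x₀ - f₂ x₀)/6) * hs)
      · exact h (by linear_combination (1/3 : ℂ) * z0 + ((-1 - (Real.sqrt 3 : ℂ) * Complex.I)/6) * z1
          + ((-1 + (Real.sqrt 3 : ℂ) * Complex.I)/6) * z2
          + ((f₃ x₀ * (Real.sqrt 3 : ℂ)^2 - f₂ x₀ * (Real.sqrt 3 : ℂ)^2)/6) * hI + ((- f₃ x₀ + f₂ x₀)/6) * hs)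
    rcases key with hk | hk | hk
    · refine ⟨_, _, isSol_comb 1 1 h1 h2 h3, ⟨x₀, hx₀, hk⟩, ?_, Or.inl ?_⟩
      · show f₁' 0 + (1:ℂ) * f₂' 0 + (1:ℂ) * f₃' 0 = 0
        rw [hb1, hb2, hb3]; ring
      · show f₁' ℓ + (1:ℂ) * f₂' ℓ + (1:ℂ) * f₃' ℓ = 0
        linear_combination (Complex.I/2) * e1 + (Complex.I/2) * e2 + (Complex.I/2) * e3
          + (f₁' ℓ + f₂' ℓ + f₃' ℓ) * hI
    · refine ⟨_, _, isSol_comb ((-1 - Complex.I * (Real.sqrt 3 : ℂ)) / 2) ((-1 + Complex.I * (Real.sqrt 3 : ℂ)) / 2) h1 h2 h3, ⟨x₀, hx₀, hk⟩, ?_, Or.inr (Or.inr ?_)⟩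
      · show f₁' 0 + ((-1 - Complex.I * (Real.sqrt 3 : ℂ)) / 2) * f₂' 0 + ((-1 + Complex.I * (Real.sqrt 3 : ℂ)) / 2) * f₃' 0 = 0
        rw [hb1, hb2, hb3]; ring
      · show -(f₁' ℓ + ((-1 - Complex.I * (Real.sqrt 3 : ℂ)) / 2) * f₂' ℓ + ((-1 + Complex.I * (Real.sqrt 3 : ℂ)) / 2) * f₃' ℓ)
            = -(Real.sqrt 3 : ℂ) * (f₁ ℓ + ((-1 - Complex.I * (Real.sqrt 3 : ℂ)) / 2) * f₂ ℓ + ((-1 + Complex.I * (Real.sqrt 3 : ℂ)) / 2) * f₃ ℓ)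
        linear_combination (-((Complex.I + (Real.sqrt 3 : ℂ))/2)) * e1
          + (((Complex.I + (Real.sqrt 3 : ℂ) + (Real.sqrt 3 : ℂ)*Complex.I^2 + (Real.sqrt 3 : ℂ)^2*Complex.I)/4)) * e2
          + (((Complex.I + (Real.sqrt 3 : ℂ) - (Real.sqrt 3 : ℂ)*Complex.I^2 - (Real.sqrt 3 : ℂ)^2*Complex.I)/4)) * e3
          + (-((-1/2)*(f₃' ℓ) + (1/4)*(f₂' ℓ) + (-1/4)*(f₂' ℓ)*(Real.sqrt 3 : ℂ)*Complex.I + (-1/4)*(f₂' ℓ)*(Real.sqrt 3 : ℂ)^2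
              + (1/4)*(f₁' ℓ) + (1/4)*(f₁' ℓ)*(Real.sqrt 3 : ℂ)*Complex.I + (1/4)*(f₁' ℓ)*(Real.sqrt 3 : ℂ)^2
              + (1/2)*(f₃ ℓ)*(Real.sqrt 3 : ℂ) + (-1/4)*(f₂ ℓ)*(Real.sqrt 3 : ℂ) + (-1/4)*(f₁ ℓ)*(Real.sqrt 3 : ℂ))) * hI
          + (-((1/4)*(f₂' ℓ) + (-1/4)*(f₁' ℓ) + (1/4)*(f₂ ℓ)*Complex.I + (-1/4)*(f₁ ℓ)*Complex.I)) * hs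
    · refine ⟨_, _, isSol_comb ((-1 + Complex.I * (Real.sqrt 3 : ℂ)) / 2) ((-1 - Complex.I * (Real.sqrt 3 : ℂ)) / 2) h1 h2 h3, ⟨x₀, hx₀, hk⟩, ?_, Or.inr (Or.inl ?_)⟩
      · show f₁' 0 + ((-1 + Complex.I * (Real.sqrt 3 : ℂ)) / 2) * f₂' 0 + ((-1 - Complex.I * (Real.sqrt 3 : ℂ)) / 2) * f₃' 0 = 0
        rw [hb1, hb2, hb3]; ring
      · show -(f₁' ℓ + ((-1 + Complex.I * (Real.sqrt 3 : ℂ)) / 2) * f₂' ℓ + ((-1 - Complex.I * (Real.sqrt 3 : ℂ)) / 2) * f₃' ℓ)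
            = (Real.sqrt 3 : ℂ) * (f₁ ℓ + ((-1 + Complex.I * (Real.sqrt 3 : ℂ)) / 2) * f₂ ℓ + ((-1 - Complex.I * (Real.sqrt 3 : ℂ)) / 2) * f₃ ℓ)
        linear_combination (-((Complex.I - (Real.sqrt 3 : ℂ))/2)) * e1
          + (((Complex.I - (Real.sqrt 3 : ℂ) - (Real.sqrt 3 : ℂ)*Complex.I^2 + (Real.sqrt 3 : ℂ)^2*Complex.I)/4)) * e2
          + (((Complex.I - (Real.sqrt 3 : ℂ) + (Real.sqrt 3 : ℂ)*Complex.I^2 - (Real.sqrt 3 : ℂ)^2*Complex.I)/4)) * e3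
          + (-((-1/2)*(f₃' ℓ) + (1/4)*(f₂' ℓ) + (1/4)*(f₂' ℓ)*(Real.sqrt 3 : ℂ)*Complex.I + (-1/4)*(f₂' ℓ)*(Real.sqrt 3 : ℂ)^2
              + (1/4)*(f₁' ℓ) + (-1/4)*(f₁' ℓ)*(Real.sqrt 3 : ℂ)*Complex.I + (1/4)*(f₁' ℓ)*(Real.sqrt 3 : ℂ)^2
              + (-1/2)*(f₃ ℓ)*(Real.sqrt 3 : ℂ) + (1/4)*(f₂ ℓ)*(Real.sqrt 3 : ℂ) + (1/4)*(f₁ ℓ)*(Real.sqrt 3 : ℂ))) * hI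
          + (-((1/4)*(f₂' ℓ) + (-1/4)*(f₁' ℓ) + (1/4)*(f₂ ℓ)*Complex.I + (-1/4)*(f₁ ℓ)*Complex.I)) * hs
  · rintro ⟨g, g', hg, ⟨x₀, hx₀, hgx⟩, hg0, hc | hc | hc⟩
    · exact ⟨g, g', g, g', g, g', hg, hg, hg, ⟨x₀, hx₀, Or.inl hgx⟩, hg0, hg0, hg0,
        by rw [hc]; ring, by rw [hc]; ring, by rw [hc]; ring⟩
    · refine ⟨g, g', fun x => ((-1 - Complex.I * (Real.sqrt 3 : ℂ)) / 2) * g x, fun x => ((-1 - Complex.I * (Real.sqrt 3 : ℂ)) / 2) * g' x,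
        fun x => ((-1 + Complex.I * (Real.sqrt 3 : ℂ)) / 2) * g x, fun x => ((-1 + Complex.I * (Real.sqrt 3 : ℂ)) / 2) * g' x,
        hg, isSol_mul _ hg, isSol_mul _ hg, ⟨x₀, hx₀, Or.inl hgx⟩,
        hg0, by show ((-1 - Complex.I * (Real.sqrt 3 : ℂ)) / 2) * g' 0 = 0; rw [hg0]; ring,
        by show ((-1 + Complex.I * (Real.sqrt 3 : ℂ)) / 2) * g' 0 = 0; rw [hg0]; ring, ?_, ?_, ?_⟩
      · show -g ℓ + ((-1 - Complex.I * (Real.sqrt 3 : ℂ)) / 2) * g ℓ - Complex.I * (g' ℓ + ((-1 - Complex.I * (Real.sqrt 3 : ℂ)) / 2) * g' ℓ) = 0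
        linear_combination ((Complex.I + (Real.sqrt 3 : ℂ))/2) * hc + ((1/2) * (g' ℓ) * (Real.sqrt 3 : ℂ)) * hI
          + ((1/2) * (g ℓ)) * hs
      · show -(((-1 - Complex.I * (Real.sqrt 3 : ℂ)) / 2) * g ℓ) + ((-1 + Complex.I * (Real.sqrt 3 : ℂ)) / 2) * g ℓ - Complex.I * (((-1 - Complex.I * (Real.sqrt 3 : ℂ)) / 2) * g' ℓ + ((-1 + Complex.I * (Real.sqrt 3 : ℂ)) / 2) * g' ℓ) = 0
        linear_combination (-Complex.I) * hc
      · show g ℓ - ((-1 + Complex.I * (Real.sqrt 3 : ℂ)) / 2) * g ℓ - Complex.I * (g' ℓ + ((-1 + Complex.I * (Real.sqrt 3 : ℂ)) / 2) * g' ℓ) = 0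
        linear_combination ((Complex.I - (Real.sqrt 3 : ℂ))/2) * hc + ((-1/2) * (g' ℓ) * (Real.sqrt 3 : ℂ)) * hI
          + ((-1/2) * (g ℓ)) * hs
    · refine ⟨g, g', fun x => ((-1 + Complex.I * (Real.sqrt 3 : ℂ)) / 2) * g x, fun x => ((-1 + Complex.I * (Real.sqrt 3 : ℂ)) / 2) * g' x,
        fun x => ((-1 - Complex.I * (Real.sqrt 3 : ℂ)) / 2) * g x, fun x => ((-1 - Complex.I * (Real.sqrt 3 : ℂ)) / 2) * g' x,
        hg, isSol_mul _ hg, isSol_mul _ hg, ⟨x₀, hx₀, Or.inl hgx⟩,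
        hg0, by show ((-1 + Complex.I * (Real.sqrt 3 : ℂ)) / 2) * g' 0 = 0; rw [hg0]; ring,
        by show ((-1 - Complex.I * (Real.sqrt 3 : ℂ)) / 2) * g' 0 = 0; rw [hg0]; ring, ?_, ?_, ?_⟩
      · show -g ℓ + ((-1 + Complex.I * (Real.sqrt 3 : ℂ)) / 2) * g ℓ - Complex.I * (g' ℓ + ((-1 + Complex.I * (Real.sqrt 3 : ℂ)) / 2) * g' ℓ) = 0
        linear_combination ((Complex.I - (Real.sqrt 3 : ℂ))/2) * hc + ((-1/2) * (g' ℓ) * (Real.sqrt 3 : ℂ)) * hI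
          + ((1/2) * (g ℓ)) * hs
      · show -(((-1 + Complex.I * (Real.sqrt 3 : ℂ)) / 2) * g ℓ) + ((-1 - Complex.I * (Real.sqrt 3 : ℂ)) / 2) * g ℓ - Complex.I * (((-1 + Complex.I * (Real.sqrt 3 : ℂ)) / 2) * g' ℓ + ((-1 - Complex.I * (Real.sqrt 3 : ℂ)) / 2) * g' ℓ) = 0
        linear_combination (-Complex.I) * hc
      · show g ℓ - ((-1 - Complex.I * (Real.sqrt 3 : ℂ)) / 2) * g ℓ - Complex.I * (g' ℓ + ((-1 - Complex.I * (Real.sqrt 3 : ℂ)) / 2) * g' ℓ) = 0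
        linear_combination ((Complex.I + (Real.sqrt 3 : ℂ))/2) * hc + ((1/2) * (g' ℓ) * (Real.sqrt 3 : ℂ)) * hI
          + ((-1/2) * (g ℓ)) * hs
end
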